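/- If σ is a separable density matrix on ℂ² ⊗ ℂ², then ⟨Φ⁺| σ |Φ⁺⟩ ≤ 1/2. -/

import Mathlib

open Matrix Kronecker
open scoped ComplexOrder

/-- A density matrix: positive semidefinite with unit trace. -/
def IsDensityMatrix {n : Type*} [Fintype n] [DecidableEq n]
    (ρ : Matrix n n ℂ) : Prop :=
  ρ.PosSemidef ∧ ρ.trace = 1

/-- Separability on `ℂ² ⊗ ℂ²`: a finite convex combination of product states. -/
def IsSeparableState (σ : Matrix (Fin 2 × Fin 2) (Fin 2 × Fin 2) ℂ) : Prop :=
  ∃ (k : ℕ) (w : Fin k → ℝ) (ρA ρB : Fin k → Matrix (Fin 2) (Fin 2) ℂ),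
    (∀ i, 0 ≤ w i) ∧ (∑ i, w i = 1) ∧
    (∀ i, IsDensityMatrix (ρA i)) ∧ (∀ i, IsDensityMatrix (ρB i)) ∧
    σ = ∑ i, (w i : ℂ) • (ρA i ⊗ₖ ρB i)

noncomputable def PhiPlus : (Fin 2 × Fin 2) → ℂ :=
  fun p => if p.1 = p.2 then ((Real.sqrt 2)⁻¹ : ℂ) else 0

lemma densityFacts (A : Matrix (Fin 2) (Fin 2) ℂ) (h : IsDensityMatrix A) :
    0 ≤ (A 0 0).re ∧ 0 ≤ (A 1 1).re ∧ (A 0 0).re + (A 1 1).re = 1 ∧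
    (A 0 0).im = 0 ∧ (A 1 1).im = 0 ∧ A 1 0 = starRingEnd ℂ (A 0 1) ∧
    (A 0 1).re ^ 2 + (A 0 1).im ^ 2 ≤ (A 0 0).re * (A 1 1).re := by
  obtain ⟨⟨hherm, hpos⟩, htr⟩ := (show (A.IsHermitian ∧ ∀ x : Fin 2 → ℂ, 0 ≤ star x ⬝ᵥ (A *ᵥ x)) ∧ A.trace = 1 from
    ⟨Matrix.posSemidef_iff_dotProduct_mulVec.mp h.1, h.2⟩)
  have hc : A 1 0 = starRingEnd ℂ (A 0 1) := by simpa using (hherm.apply 1 0).symm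
  have h00 := hpos (Pi.single 0 1)
  have h11 := hpos (Pi.single 1 1)
  simp [dotProduct, mulVec, Fin.sum_univ_two, Pi.single_apply] at h00 h11
  rw [Complex.le_def] at h00 h11
  obtain ⟨h00re, h00im⟩ := h00
  obtain ⟨h11re, h11im⟩ := h11
  have htr1 : (A 0 0).re + (A 1 1).re = 1 := by
    have := congrArg Complex.re htr; rw [Matrix.trace_fin_two] at this; simpa using this
  have hq1 := hpos ![A 0 1, -(A 0 0)]
  have hq2 := hpos ![-(A 1 1), starRingEnd ℂ (A 0 1)]
  simp [dotProduct, mulVec, Fin.sum_univ_two, hc] at hq1 hq2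
  rw [Complex.le_def] at hq1 hq2
  have hr1 := hq1.1
  have hr2 := hq2.1
  simp [Complex.mul_re, Complex.add_re, Complex.mul_im, Complex.add_im, ← h00im, ← h11im] at hr1 hr2
  exact ⟨by simpa using h00re, by simpa using h11re, htr1, by simpa using h00im.symm,
    by simpa using h11im.symm, hc, by nlinarith [hr1, hr2, htr1]⟩

lemma scalar_bound (a d a' d' cr ci cr' ci' : ℝ) (ha : 0 ≤ a) (hd : 0 ≤ d) (ha' : 0 ≤ a') (hd' : 0 ≤ d')
    (hsA : a + d = 1) (hsB : a' + d' = 1)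
    (hnA : cr^2 + ci^2 ≤ a * d) (hnB : cr'^2 + ci'^2 ≤ a' * d') :
    a * a' * (1/2) + (cr * cr' - ci * ci') + d * d' * (1/2) ≤ 1/2 := by
  have hP : (cr*cr' - ci*ci')^2 ≤ (a*d)*(a'*d') := by
    nlinarith [sq_nonneg (cr*ci' + ci*cr'), mul_le_mul hnA hnB (by positivity) (by nlinarith),
      sq_nonneg cr, sq_nonneg ci]
  have hs : 0 ≤ a*d' + a'*d := by positivity
  have h2r : 2*(cr*cr' - ci*ci') ≤ a*d' + a'*d := by
    nlinarith [hP, hs, sq_nonneg (a*d' - a'*d), sq_nonneg (a*d' + a'*d - 2*(cr*cr' - ci*ci'))]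
  nlinarith [h2r]

lemma prod_fidelity (A B : Matrix (Fin 2) (Fin 2) ℂ)
    (hA : IsDensityMatrix A) (hB : IsDensityMatrix B) :
    (star PhiPlus ⬝ᵥ (A ⊗ₖ B).mulVec PhiPlus).re ≤ 1 / 2 := by
  have hval : star PhiPlus ⬝ᵥ (A ⊗ₖ B).mulVec PhiPlus =
      (1/2 : ℂ) * (A 0 0 * B 0 0 + A 0 1 * B 0 1 + A 1 0 * B 1 0 + A 1 1 * B 1 1) := by
    have h2 : (((Real.sqrt 2) : ℝ) : ℂ)⁻¹ * (((Real.sqrt 2) : ℝ) : ℂ)⁻¹ = 2⁻¹ := by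
      rw [← mul_inv, ← Complex.ofReal_mul, Real.mul_self_sqrt (by norm_num)]
      norm_num
    simp [dotProduct, mulVec, Fintype.sum_prod_type, Fin.sum_univ_two, PhiPlus,
      kroneckerMap_apply]
    linear_combination (A 0 0 * B 0 0 + A 0 1 * B 0 1 + A 1 0 * B 1 0 + A 1 1 * B 1 1) * h2
  obtain ⟨ha, hd, hsA, hia, hid, hcA, hnA⟩ := densityFacts A hA
  obtain ⟨ha', hd', hsB, hia', hid', hcB, hnB⟩ := densityFacts B hB
  rw [hval]
  simp only [Complex.mul_re, Complex.add_re, Complex.add_im, Complex.mul_im, hcA, hcB,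
    Complex.conj_re, Complex.conj_im]
  rw [show ((1:ℂ)/2).re = 1/2 from by norm_num, show ((1:ℂ)/2).im = 0 from by norm_num]
  rw [hia, hid, hia', hid']
  ring_nf
  linarith [scalar_bound (A 0 0).re (A 1 1).re (B 0 0).re (B 1 1).re (A 0 1).re (A 0 1).im
    (B 0 1).re (B 0 1).im ha hd ha' hd' hsA hsB hnA hnB]

theorem separable_fidelity_bound (σ : Matrix (Fin 2 × Fin 2) (Fin 2 × Fin 2) ℂ)
    (hσ : IsDensityMatrix σ) (hsep : IsSeparableState σ) :
    (star PhiPlus ⬝ᵥ σ.mulVec PhiPlus).re ≤ 1 / 2 := by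
  obtain ⟨k, w, ρA, ρB, hw, hws, hA, hB, hσeq⟩ := hsep
  have hlin : ∀ (s : Finset (Fin k)),
      star PhiPlus ⬝ᵥ (∑ i ∈ s, (w i : ℂ) • (ρA i ⊗ₖ ρB i)) *ᵥ PhiPlus
        = ∑ i ∈ s, (w i : ℂ) * (star PhiPlus ⬝ᵥ (ρA i ⊗ₖ ρB i) *ᵥ PhiPlus) := by
    intro s
    induction s using Finset.induction_on with
    | empty => simp
    | insert _ _ h ih =>
        rw [Finset.sum_insert h, Finset.sum_insert h, Matrix.add_mulVec, dotProduct_add, ih,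
          Matrix.smul_mulVec, dotProduct_smul, smul_eq_mul]
  rw [hσeq]
  rw [hlin Finset.univ, Complex.re_sum]
  calc ∑ i, ((w i : ℂ) * (star PhiPlus ⬝ᵥ (ρA i ⊗ₖ ρB i).mulVec PhiPlus)).re
      ≤ ∑ i, w i * (1/2) := by
        apply Finset.sum_le_sum
        intro i _
        have : ((w i : ℂ) * (star PhiPlus ⬝ᵥ (ρA i ⊗ₖ ρB i).mulVec PhiPlus)).re
            = w i * (star PhiPlus ⬝ᵥ (ρA i ⊗ₖ ρB i).mulVec PhiPlus).re := by
          simp [Complex.mul_re]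
        rw [this]
        exact mul_le_mul_of_nonneg_left (prod_fidelity _ _ (hA i) (hB i)) (hw i)
    _ = 1/2 := by rw [← Finset.sum_mul, hws, one_mul]
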